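/- For b ≥ 2, let φ = (√(b²+4) - b)/2 be the fractional part of the b-th metallic ratio. For every integer j with 0 ≤ j ≤ b-2, set y_j = φ/(1 - j·φ) (the j-th iterate of φ under the left branch T₁(x)=x/(1-x)) and c_j = (1-φ)/(1 - j·φ). Then the reduced entropy density of the Haros graph of y_j, computed from its explicit degree distribution P(2)=y_j, P(3)=1-2y_j, P(bn+3-j)=c_j·φⁿ for n ≥ 1, satisfies (y_j·log y_j - ∑_{n=1}^{∞} c_j·φⁿ·log(c_j·φⁿ)) / y_j = -log(1-φ) - ((1+φ)/b)·log φ; in particular this value is independent of j, so the entropy density is constant along the periodic RG orbit of the metallic ratio. -/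

import Mathlib

theorem stmt17 (b : ℕ) (hb : 2 ≤ b) (j : ℕ) (hj : j ≤ b - 2) :
    let φ : ℝ := (Real.sqrt ((b : ℝ)^2 + 4) - b) / 2
    let y : ℝ := φ / (1 - (j : ℝ) * φ)
    let c : ℝ := (1 - φ) / (1 - (j : ℝ) * φ)
    (y * Real.log y -
        ∑' n : ℕ, c * φ^(n+1) * Real.log (c * φ^(n+1))) / y
      = -Real.log (1 - φ) - ((1 + φ) / (b : ℝ)) * Real.log φ := by
  intro φ y c
  have hφdef : φ = (Real.sqrt ((b : ℝ)^2 + 4) - b) / 2 := rfl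
  have hydef : y = φ / (1 - (j : ℝ) * φ) := rfl
  have hcdef : c = (1 - φ) / (1 - (j : ℝ) * φ) := rfl
  have hbR : (2:ℝ) ≤ (b:ℝ) := by exact_mod_cast hb
  have hs0 : (0:ℝ) ≤ Real.sqrt ((b:ℝ)^2 + 4) := Real.sqrt_nonneg _
  have hs2 : Real.sqrt ((b:ℝ)^2 + 4) ^ 2 = (b:ℝ)^2 + 4 := Real.sq_sqrt (by positivity)
  have hφ0 : 0 < φ := by rw [hφdef]; nlinarith
  have hquad : φ^2 + (b:ℝ) * φ = 1 := by rw [hφdef]; nlinarith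
  have hφ1 : φ < 1 := by nlinarith
  have hj2 : (j:ℝ) + 2 ≤ (b:ℝ) := by
    have : j + 2 ≤ b := by omega
    exact_mod_cast this
  have hjφ : (j:ℝ) * φ < 1 := by nlinarith [mul_le_mul_of_nonneg_right hj2 hφ0.le]
  have h1j : 0 < 1 - (j:ℝ) * φ := by linarith
  have h1φ : 0 < 1 - φ := by linarith
  have hy0 : 0 < y := div_pos hφ0 h1j
  have hc0 : 0 < c := div_pos h1φ h1j
  clear_value φ y c
  clear hφdef hs0 hs2
  have hφn : ‖φ‖ < 1 := by rw [Real.norm_eq_abs, abs_of_pos hφ0]; exact hφ1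
  -- geometric sums
  have hA : ∑' n : ℕ, φ^(n+1) = φ / (1 - φ) := by
    have : ∀ n : ℕ, φ^(n+1) = φ * φ^n := fun n => by ring
    simp_rw [this]
    rw [tsum_mul_left, tsum_geometric_of_lt_one hφ0.le hφ1, div_eq_mul_inv]
  have hgsum : Summable (fun n : ℕ => (n:ℝ) * φ^n) := by
    have := summable_pow_mul_geometric_of_norm_lt_one (R := ℝ) 1 hφn
    simpa using this
  have hgshift : Summable (fun n : ℕ => ((n:ℝ)+1) * φ^(n+1)) := by
    have := (summable_nat_add_iff (f := fun n : ℕ => (n:ℝ) * φ^n) 1).2 hgsum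
    simpa using this
  have hB : ∑' n : ℕ, ((n:ℝ)+1) * φ^(n+1) = φ / (1 - φ)^2 := by
    have h0 := Summable.tsum_eq_zero_add hgsum
    have hg : ∑' n : ℕ, (n:ℝ) * φ^n = φ / (1 - φ)^2 :=
      tsum_coe_mul_geometric_of_norm_lt_one hφn
    rw [hg] at h0
    simp only [Nat.cast_zero, zero_mul, zero_add, Nat.cast_add, Nat.cast_one] at h0
    rw [← h0]
  have hAs : Summable (fun n : ℕ => φ^(n+1)) := by
    have : ∀ n : ℕ, φ^(n+1) = φ * φ^n := fun n => by ring
    simp_rw [this]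
    exact (summable_geometric_of_lt_one hφ0.le hφ1).mul_left φ
  -- compute the tsum
  have hlog : ∀ n : ℕ, c * φ^(n+1) * Real.log (c * φ^(n+1))
      = (c * Real.log c) * φ^(n+1) + (c * Real.log φ) * (((n:ℝ)+1) * φ^(n+1)) := by
    intro n
    rw [Real.log_mul hc0.ne' (pow_ne_zero _ hφ0.ne'), Real.log_pow]
    push_cast
    ring
  have hsum : ∑' n : ℕ, c * φ^(n+1) * Real.log (c * φ^(n+1))
      = (c * Real.log c) * (φ / (1 - φ)) + (c * Real.log φ) * (φ / (1 - φ)^2) := by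
    simp_rw [hlog]
    rw [Summable.tsum_add (hAs.mul_left _) (hgshift.mul_left _), tsum_mul_left, tsum_mul_left, hA, hB]
  rw [hsum]
  -- rewrite logs
  have hly : Real.log y = Real.log φ - Real.log (1 - (j:ℝ)*φ) := by
    rw [hydef, Real.log_div hφ0.ne' h1j.ne']
  have hlc : Real.log c = Real.log (1 - φ) - Real.log (1 - (j:ℝ)*φ) := by
    rw [hcdef, Real.log_div h1φ.ne' h1j.ne']
  have hcy1 : c * (φ / (1 - φ)) = y := by
    rw [hcdef, hydef]; field_simp
  have hcy2 : c * (φ / (1 - φ)^2) = y / (1 - φ) := by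
    rw [hcdef, hydef]; field_simp
  have hcoef : (1:ℝ) - 1/(1-φ) + (1+φ)/(b:ℝ) = 0 := by
    have hbne : (b:ℝ) ≠ 0 := by positivity
    field_simp
    nlinarith
  rw [div_eq_iff hy0.ne']
  rw [mul_comm c (Real.log c), mul_comm c (Real.log φ), mul_assoc, mul_assoc, hcy1, hcy2,
    hly, hlc]
  linear_combination (y * Real.log φ) * hcoef
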